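/- Let n > 2, k = 2^r + 1 with r ≥ 1 and r + 1 ≤ n, and s_i = k·2^{n+i} + 1. The Frobenius number of P_k(n) (the largest integer not in P_k(n)) equals 2·s_1 + s_n + s_{n+r} - s_0. -/

import Mathlib

private lemma gen_sum (n r : ℕ) (il : List ℕ) :
    (il.map fun i => (2^r+1)*2^(n+i)+1).sum
      = ((2^r+1)*2^n) * (il.map fun i => 2^i).sum + il.length := by
  induction il with
  | nil => simp
  | cons a tl ih =>
    simp only [List.map_cons, List.sum_cons, List.length_cons]
    rw [ih, pow_add]
    ring

private lemma len_le_sum (il : List ℕ) : il.length ≤ (il.map fun i => 2^i).sum := by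
  induction il with
  | nil => simp
  | cons a tl ih =>
    have : 1 ≤ 2^a := Nat.one_le_two_pow
    simp only [List.map_cons, List.sum_cons, List.length_cons]
    omega

private lemma rep_split (il : List ℕ) (h : il.length < (il.map fun i => 2^i).sum) :
    ∃ il' : List ℕ, il'.length = il.length + 1 ∧
      (il'.map fun i => 2^i).sum = (il.map fun i => 2^i).sum := by
  induction il with
  | nil => simp at h
  | cons a tl ih =>
    match a with
    | 0 =>
      simp only [List.map_cons, List.sum_cons, List.length_cons, pow_zero] at h ⊢
      obtain ⟨tl', h1, h2⟩ := ih (by omega)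
      exact ⟨0 :: tl', by simp [h1], by simp [h2]⟩
    | a + 1 =>
      refine ⟨a :: a :: tl, by simp, ?_⟩
      simp only [List.map_cons, List.sum_cons, pow_succ]
      ring

private lemma rep_range (t d M : ℕ)
    (h : ∃ il : List ℕ, il.length = t ∧ (il.map fun i => 2^i).sum = M)
    (hd : t + d ≤ M) :
    ∃ il : List ℕ, il.length = t + d ∧ (il.map fun i => 2^i).sum = M := by
  induction d with
  | zero => exact h
  | succ d ih =>
    obtain ⟨il, h1, h2⟩ := ih (by omega)
    obtain ⟨il', h1', h2'⟩ := rep_split il (by omega)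
    exact ⟨il', by omega, by omega⟩

private lemma pow3_ne (n r a b c : ℕ) (hn : 3 ≤ n) (hr : 1 ≤ r) :
    2^a + 2^b + 2^c ≠ 2^(n+r) + 2^n + 3 := by
  intro h
  have hq : ∀ x : ℕ, 2^x = 1 ∨ 2^x = 2 ∨ (4:ℕ) ∣ 2^x := by
    intro x
    match x with
    | 0 => left; rfl
    | 1 => right; left; rfl
    | y + 2 => right; right; exact ⟨2^y, by ring⟩
  have hne : ∀ x : ℕ, 2^x ≠ 2^(n+r) + 2^n := by
    intro x hx
    have h5 : 2^n < 2^(n+r) := Nat.pow_lt_pow_right (by norm_num) (by omega)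
    have hpos : 0 < 2^n := Nat.pow_pos (by norm_num)
    have h1 : 2^(n+r) < 2^x := by omega
    have h2 : n + r + 1 ≤ x := by
      have := (Nat.pow_lt_pow_iff_right (by norm_num : 1 < 2)).mp h1
      omega
    have h3 : 2^(n+r+1) ≤ 2^x := Nat.pow_le_pow_right (by norm_num) h2
    have h4 : 2^(n+r+1) = 2^(n+r) + 2^(n+r) := by ring
    omega
  have h8 : (8:ℕ) ≤ 2^n := by
    calc (8:ℕ) = 2^3 := rfl
    _ ≤ 2^n := Nat.pow_le_pow_right (by norm_num) hn
  have h16 : (16:ℕ) ≤ 2^(n+r) := by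
    calc (16:ℕ) = 2^4 := rfl
    _ ≤ 2^(n+r) := Nat.pow_le_pow_right (by norm_num) (by omega)
  have h4n : (4:ℕ) ∣ 2^n := (show (4:ℕ) = 2^2 by norm_num) ▸ pow_dvd_pow 2 (by omega : 2 ≤ n)
  have h4nr : (4:ℕ) ∣ 2^(n+r) := (show (4:ℕ) = 2^2 by norm_num) ▸ pow_dvd_pow 2 (by omega : 2 ≤ n + r)
  have ha := hq a
  have hb := hq b
  have hc := hq c
  have hna := hne a
  have hnb := hne b
  have hnc := hne c
  omega


private lemma memlist (n r : ℕ) (il : List ℕ) :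
    (il.map fun i => (2^r+1)*2^(n+i)+1).sum ∈
      AddSubmonoid.closure {m : ℕ | ∃ i : ℕ, m = (2^r+1)*2^(n+i)+1} := by
  induction il with
  | nil => exact zero_mem _
  | cons a tl ih =>
    rw [List.map_cons, List.sum_cons]
    exact add_mem (AddSubmonoid.subset_closure ⟨a, rfl⟩) ih

private lemma exists_il (n r : ℕ) : ∀ l : List ℕ,
    (∀ y ∈ l, ∃ i : ℕ, y = (2^r+1)*2^(n+i)+1) →
    ∃ il : List ℕ, l = il.map fun i => (2^r+1)*2^(n+i)+1 := by
  intro l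
  induction l with
  | nil => exact fun _ => ⟨[], rfl⟩
  | cons x tl ih =>
    intro hl
    obtain ⟨il, hil⟩ := ih (fun y hy => hl y (List.mem_cons_of_mem _ hy))
    obtain ⟨i, hi⟩ := hl x List.mem_cons_self
    exact ⟨i :: il, by rw [List.map_cons, ← hi, ← hil]⟩

theorem proth_frobenius_number (n r : ℕ) (hn : 2 < n) (hr : 1 ≤ r) (hrn : r + 1 ≤ n) :
    IsGreatest {m : ℕ | m ∉ AddSubmonoid.closure
        {m : ℕ | ∃ i : ℕ, m = (2 ^ r + 1) * 2 ^ (n + i) + 1}}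
      (2 * ((2 ^ r + 1) * 2 ^ (n + 1) + 1) + ((2 ^ r + 1) * 2 ^ (n + n) + 1)
        + ((2 ^ r + 1) * 2 ^ (n + (n + r)) + 1) - ((2 ^ r + 1) * 2 ^ n + 1)) := by
  have hF : 2 * ((2 ^ r + 1) * 2 ^ (n + 1) + 1) + ((2 ^ r + 1) * 2 ^ (n + n) + 1)
        + ((2 ^ r + 1) * 2 ^ (n + (n + r)) + 1) - ((2 ^ r + 1) * 2 ^ n + 1)
      = ((2^r+1)*2^n)*((2^r+1)*2^n) + 3*((2^r+1)*2^n) + 3 :=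
    Nat.sub_eq_of_eq_add (by ring)
  rw [hF]
  set q : ℕ := (2^r+1)*2^n with hq
  have h8 : (8:ℕ) ≤ 2 ^ n := by
    calc (8:ℕ) = 2^3 := rfl
    _ ≤ 2^n := Nat.pow_le_pow_right (by norm_num) (by omega)
  have h2r : (2:ℕ) ≤ 2 ^ r := by
    calc (2:ℕ) = 2^1 := rfl
    _ ≤ 2^r := Nat.pow_le_pow_right (by norm_num) hr
  have hq24 : 24 ≤ q := by
    have : 3 * 8 ≤ (2^r+1) * 2^n := Nat.mul_le_mul (by omega) h8
    omega
  have hqexp : q = 2^(n+r) + 2^n := by rw [hq, pow_add]; ring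
  constructor
  · -- F not in the closure
    simp only [Set.mem_setOf_eq]
    intro hmem
    obtain ⟨l, hl, hsum⟩ := AddSubmonoid.exists_list_of_mem_closure hmem
    obtain ⟨il, rfl⟩ := exists_il n r l hl
    rw [gen_sum] at hsum
    rw [← hq] at hsum
    have htM : il.length ≤ (il.map fun i => 2^i).sum := len_le_sum il
    have ht0 : il.length = 0 → (il.map fun i => 2^i).sum = 0 := by
      intro h0
      have : il = [] := List.length_eq_zero_iff.mp h0
      rw [this]; simp
    have hub : (il.map fun i => 2^i).sum ≤ q + 3 := by
      by_contra hcon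
      push_neg at hcon
      have h1 : q * (q+4) ≤ q * (il.map fun i => 2^i).sum :=
        Nat.mul_le_mul_left q (by omega)
      have h2 : q*(q+4) = q*q + 4*q := by ring
      omega
    have hlb : q + 3 ≤ (il.map fun i => 2^i).sum := by
      by_contra hcon
      push_neg at hcon
      have h1 : (q+1) * (il.map fun i => 2^i).sum ≤ (q+1)*(q+2) :=
        Nat.mul_le_mul_left _ (by omega)
      have h2 : (q+1)*(q+2) = q*q+3*q+2 := by ring
      have h3 : (q+1)*(il.map fun i => 2^i).sum
          = q*(il.map fun i => 2^i).sum + (il.map fun i => 2^i).sum := by ring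
      omega
    have hMeq : (il.map fun i => 2^i).sum = q + 3 := le_antisymm hub hlb
    have hteq : il.length = 3 := by
      have : q * (il.map fun i => 2^i).sum = q*q + 3*q := by rw [hMeq]; ring
      omega
    obtain ⟨a, b, c, rfl⟩ := List.length_eq_three.mp hteq
    simp only [List.map_cons, List.map_nil, List.sum_cons, List.sum_nil] at hMeq
    exact pow3_ne n r a b c (by omega) hr (by omega)
  · -- upper bound
    intro m hm
    simp only [Set.mem_setOf_eq] at hm
    by_contra hcon
    push_neg at hcon
    apply hm
    have cov : ∀ m', q*q+3*q+4 ≤ m' →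
        ∃ M, q+3 ≤ M ∧ q*M + max 4 (M - q) ≤ m' ∧ m' ≤ (q+1)*M := by
      intro m' hm'
      induction m', hm' using Nat.le_induction with
      | base =>
        refine ⟨q+3, le_refl _, ?_, ?_⟩
        · have : q*(q+3) = q*q+3*q := by ring
          omega
        · have : (q+1)*(q+3) = q*q+4*q+3 := by ring
          omega
      | succ m' hm' ih =>
        obtain ⟨M, h1, h2, h3⟩ := ih
        by_cases hle : m' + 1 ≤ (q+1)*M
        · exact ⟨M, h1, by omega, hle⟩
        · refine ⟨M+1, by omega, ?_, ?_⟩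
          · have e1 : q*(M+1) = q*M + q := by ring
            have e2 : (q+1)*M = q*M + M := by ring
            omega
          · have e2 : (q+1)*M = q*M+M := by ring
            have e3 : (q+1)*(M+1) = q*M+M+q+1 := by ring
            omega
    obtain ⟨M, hM3, hlow, hhigh⟩ := cov m (by omega)
    have hcert : ∃ il : List ℕ, il.length = max 4 (M - q) ∧
        (il.map fun i => 2^i).sum = M := by
      rcases eq_or_lt_of_le hM3 with heq | hlt
      · refine ⟨[n+r, n, 1, 0], by simp; omega, ?_⟩
        simp only [List.map_cons, List.map_nil, List.sum_cons, List.sum_nil]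
        omega
      · refine ⟨[n+r, n, 1, 1] ++ List.replicate (M - q - 4) 0, ?_, ?_⟩
        · simp only [List.length_append, List.length_replicate, List.length_cons,
            List.length_nil]
          omega
        · rw [List.map_append, List.sum_append]
          have hrep : (List.replicate (M-q-4) 0).map (fun i => (2:ℕ)^i)
              = List.replicate (M-q-4) 1 := by simp
          rw [hrep, List.sum_replicate]
          simp only [List.map_cons, List.map_nil, List.sum_cons, List.sum_nil, smul_eq_mul]
          omega
    have htt : max 4 (M-q) ≤ m - q*M := by omega
    have htMle : m - q*M ≤ M := by
      have e2 : (q+1)*M = q*M + M := by ring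
      omega
    obtain ⟨il, hlen, hsum⟩ := rep_range (max 4 (M-q)) (m - q*M - max 4 (M-q)) M hcert
      (by omega)
    have hmem2 := memlist n r il
    rw [gen_sum, ← hq] at hmem2
    have hmm : m = q * (il.map fun i => 2^i).sum + il.length := by
      rw [hsum]
      omega
    rw [hmm]
    exact hmem2
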